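/- arXiv:1505.02893 — 3 statements merged into one kernel-verified Lean document; each statement's English description precedes it below -/
import Mathlib

section
/- Let G be the group (ℚ,+) written multiplicatively, m ≥ 2 an integer, and let φ be the automorphism of the group algebra A = FG induced by g ↦ g^m (i.e. by q ↦ mq on ℚ). Equip A with the F[ℤ]-action where the generator acts by φ. Then the commutative algebra A satisfies c_n^{Fℤ}(A) = +∞ for every n ≥ 1; more precisely, for every n the quotient P_n^{Fℤ}/(P_n^{Fℤ} ∩ Id^{Fℤ}(A)) is infinite-dimensional. -/
noncomputable section

open scoped TensorProduct

/-- A generalized `H`-action on an algebra `A`. -/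
def IsGenAction {F : Type*} [Field F] {A : Type*} [NonUnitalRing A] [Module F A]
    {H : Type*} [Ring H] [Algebra F H] (ρ : H →ₐ[F] Module.End F A) : Prop :=
  ∀ h : H, ∃ (k : ℕ) (h₁ h₂ h₃ h₄ : Fin k → H), ∀ a b : A,
    ρ h (a * b) = ∑ i : Fin k, (ρ (h₁ i) a * ρ (h₂ i) b + ρ (h₃ i) b * ρ (h₄ i) a)

variable (F : Type*) [Field F]
  (A : Type*) [NonUnitalRing A] [Module F A] [SMulCommClass F A A] [IsScalarTower F A A]
  (H : Type*) [Ring H] [Algebra F H]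

/-- We model the free `H`-polynomial algebra `F⟨X|H⟩ = ⊕_{n≥1} H^{⊗n} ⊗ F⟨X⟩^{(n)}`
(together with an adjoined unit) as the tensor algebra of `⊕_{i∈ℕ} H = ℕ →₀ H`, with
`x_i^h` corresponding to `ι (single i h)`. -/
abbrev FreeHPolyAlg := TensorAlgebra F (ℕ →₀ H)

/-- The non-unital subalgebra of genuine (positive-degree) `H`-polynomials. -/
def FreeHPoly : NonUnitalSubalgebra F (FreeHPolyAlg F H) :=
  NonUnitalAlgebra.adjoin F (Set.range (TensorAlgebra.ι F (M := ℕ →₀ H)))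

/-- The evaluation (substitution) homomorphism `ψ̄ : F⟨X|H⟩ → A⁺` attached to a map
`ψ : X → A`; it satisfies `ψ̄(x_i^h) = h·ψ(x_i)` (values taken in the unitalization `A⁺`
since `A` need not be unital). -/
def evalH (ρ : H →ₐ[F] Module.End F A) (ψ : ℕ → A) :
    FreeHPolyAlg F H →ₐ[F] Unitization F A :=
  TensorAlgebra.lift F ((Unitization.inrHom F F A).comp
    (Finsupp.lsum F fun i => (LinearMap.applyₗ (ψ i)).comp ρ.toLinearMap))

/-- The space of polynomial `H`-identities of `A`. -/
def IdHSub (ρ : H →ₐ[F] Module.End F A) : Submodule F (FreeHPolyAlg F H) :=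
  ⨅ ψ : ℕ → A, LinearMap.ker (evalH F A H ρ ψ).toLinearMap

/-- The space `P_n^H` of multilinear `H`-polynomials in `x_1, …, x_n`, spanned by the
monomials `x^{h₁}_{σ(1)} ⋯ x^{hₙ}_{σ(n)}`. -/
def PnH (n : ℕ) : Submodule F (FreeHPolyAlg F H) :=
  Submodule.span F {f | ∃ (σ : Equiv.Perm (Fin n)) (h : Fin n → H),
    f = (List.ofFn fun j => TensorAlgebra.ι F
          (Finsupp.single ((σ j : Fin n) : ℕ) (h j))).prod}

/-- The `n`-th codimension of polynomial `H`-identities of `A`,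
`c_n^H(A) = dim P_n^H/(P_n^H ∩ Id^H(A))`, as a cardinal. -/
def cnH (ρ : H →ₐ[F] Module.End F A) (n : ℕ) : Cardinal :=
  Module.rank F (↥(PnH F H n) ⧸ Submodule.comap (PnH F H n).subtype (IdHSub F A H ρ))

end

noncomputable section

theorem inr_list_prod' {F : Type*} [Field F] {A : Type*} [Ring A] [Algebra F A] :
    ∀ (a : A) (l : List A),
      ((a :: l).map (fun x : A => (x : Unitization F A))).prod = ((a :: l).prod : A) := by
  intro a l
  induction l generalizing a with
  | nil => simp
  | cons b t ih =>
      have h := ih b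
      simp only [List.map_cons, List.prod_cons] at h ⊢
      rw [h, ← Unitization.inr_mul]


/-- Let `G = (ℚ,+)` written multiplicatively, `m ≥ 2`, `A = FG` its group algebra, with
the `F[ℤ]`-action in which the generator acts by the automorphism `φ` induced by
`g ↦ g^m` (i.e. `q ↦ mq` on `ℚ`), so that `ρ(single k 1)` maps `e_q` to `e_{m^k q}`.
Then the commutative algebra `A` satisfies `c_n^{Fℤ}(A) = +∞` for every `n ≥ 1`: the
quotient `P_n^{Fℤ}/(P_n^{Fℤ} ∩ Id^{Fℤ}(A))` is infinite-dimensional. -/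
theorem codim_infinite_group_algebra (F : Type*) [Field F] (m : ℕ) (hm : 2 ≤ m)
    (ρ : AddMonoidAlgebra F ℤ →ₐ[F] Module.End F (AddMonoidAlgebra F ℚ))
    (hρ : ∀ (k : ℤ) (q : ℚ) (c : F),
      ρ (AddMonoidAlgebra.single k 1) (AddMonoidAlgebra.single q c) =
        AddMonoidAlgebra.single ((m : ℚ) ^ k * q) c) :
    ∀ n : ℕ, 1 ≤ n →
      ¬ Module.Finite F
        (↥(PnH F (AddMonoidAlgebra F ℤ) n) ⧸
          Submodule.comap (PnH F (AddMonoidAlgebra F ℤ) n).subtype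
            (IdHSub F (AddMonoidAlgebra F ℚ) (AddMonoidAlgebra F ℤ) ρ)) := by
  intro n hn hfin
  set H := AddMonoidAlgebra F ℤ
  set A := AddMonoidAlgebra F ℚ
  obtain ⟨n', rfl⟩ : ∃ n', n = n' + 1 := ⟨n - 1, (Nat.succ_pred_eq_of_pos hn).symm⟩
  -- the exponents
  set e : ℕ → Fin (n' + 1) → ℤ := fun k j => if j = 0 then (k : ℤ) else 0 with he
  -- the polynomials f k = x₁^{φ^k} x₂ ⋯ x_n
  set f : ℕ → FreeHPolyAlg F H := fun k =>
    (List.ofFn fun j : Fin (n' + 1) => TensorAlgebra.ι F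
      (Finsupp.single (j : ℕ) (AddMonoidAlgebra.single (e k j) (1 : F)))).prod with hf
  have hmem : ∀ k, f k ∈ PnH F H (n' + 1) := by
    intro k
    exact Submodule.subset_span
      ⟨Equiv.refl _, fun j => AddMonoidAlgebra.single (e k j) (1 : F), rfl⟩
  -- the substitution
  set ψ : ℕ → A := fun i => AddMonoidAlgebra.single (if i = 0 then (1 : ℚ) else 0) (1 : F)
    with hψ
  -- evaluation of generators
  have heval : ∀ (i : ℕ) (h : H),
      evalH F A H ρ ψ (TensorAlgebra.ι F (Finsupp.single i h)) =
        (ρ h (ψ i) : Unitization F A) := by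
    intro i h
    simp [evalH, TensorAlgebra.lift_ι_apply]
  -- evaluation of f k
  have hfk : ∀ k : ℕ, evalH F A H ρ ψ (f k) =
      ((AddMonoidAlgebra.single ((m : ℚ) ^ k) (1 : F) : A) : Unitization F A) := by
    intro k
    rw [hf]
    rw [map_list_prod]
    have hmap : (List.ofFn fun j : Fin (n' + 1) => TensorAlgebra.ι F
          (Finsupp.single (j : ℕ) (AddMonoidAlgebra.single (e k j) (1 : F)))).map
          (evalH F A H ρ ψ) =
        (List.ofFn fun j : Fin (n' + 1) =>
          (AddMonoidAlgebra.single ((m : ℚ) ^ (e k j) * (if (j : ℕ) = 0 then (1:ℚ) else 0))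
            (1 : F) : A)).map (fun x : A => (x : Unitization F A)) := by
      rw [List.map_ofFn, List.map_ofFn]
      congr 1
      funext j
      simp only [Function.comp_apply, heval]
      simp only [hψ, hρ]
    rw [hmap, List.ofFn_succ, inr_list_prod']
    congr 1
    rw [List.prod_cons]
    have h0 : ((m : ℚ) ^ (e k 0) * (if ((0 : Fin (n'+1)) : ℕ) = 0 then (1:ℚ) else 0))
        = (m : ℚ) ^ k := by
      simp [he, zpow_natCast]
    have htail : (List.ofFn fun j : Fin n' =>
        (AddMonoidAlgebra.single
          ((m : ℚ) ^ (e k j.succ) * (if ((j.succ : Fin (n'+1)) : ℕ) = 0 then (1:ℚ) else 0))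
          (1 : F) : A)).prod = 1 := by
      have : ∀ j : Fin n',
          (AddMonoidAlgebra.single
            ((m : ℚ) ^ (e k j.succ) * (if ((j.succ : Fin (n'+1)) : ℕ) = 0 then (1:ℚ) else 0))
            (1 : F) : A) = 1 := by
        intro j
        have h1 : ((j.succ : Fin (n'+1)) : ℕ) ≠ 0 := by
          simp [Fin.val_succ]
        rw [if_neg h1, mul_zero]
        exact (AddMonoidAlgebra.one_def).symm
      simp only [this, List.ofFn_const, List.prod_replicate, one_pow]
    rw [htail, mul_one, h0]
  -- linear independence of the images
  set p : ℕ → ↥(PnH F H (n' + 1)) := fun k => ⟨f k, hmem k⟩ with hp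
  set Q := Submodule.comap (PnH F H (n' + 1)).subtype (IdHSub F A H ρ) with hQ
  have li : LinearIndependent F (fun k : ℕ => Submodule.Quotient.mk (p := Q) (p k)) := by
    rw [linearIndependent_iff']
    intro s g hsum k₀ hk₀
    -- pass to the submodule element
    have hmem2 : (∑ k ∈ s, g k • p k) ∈ Q := by
      rw [← Submodule.Quotient.mk_eq_zero]
      rw [← hsum]
      have hmk : ∀ x : ↥(PnH F H (n' + 1)), Submodule.Quotient.mk (p := Q) x = Q.mkQ x :=
        fun _ => rfl
      simp only [hmk, map_sum, map_smul]
    have hid : (∑ k ∈ s, g k • f k) ∈ IdHSub F A H ρ := by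
      have h2 := hmem2
      rw [hQ, Submodule.mem_comap] at h2
      simpa [hp, Submodule.coe_subtype, AddSubmonoidClass.coe_finset_sum, SetLike.val_smul]
        using h2
    rw [IdHSub, Submodule.mem_iInf] at hid
    have hker := hid ψ
    rw [LinearMap.mem_ker] at hker
    have hval : (∑ k ∈ s, g k • ((AddMonoidAlgebra.single ((m : ℚ) ^ k) (1 : F) : A)
        : Unitization F A)) = 0 := by
      rw [← hker]
      simp only [AlgHom.toLinearMap_apply, map_sum, map_smul, hfk]
    have hvalA : (∑ k ∈ s, g k • (AddMonoidAlgebra.single ((m : ℚ) ^ k) (1 : F) : A)) = 0 := by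
      apply Unitization.inr_injective (R := F)
      rw [Unitization.inr_zero, ← hval]
      have hco : ((∑ k ∈ s, g k • AddMonoidAlgebra.single ((m:ℚ)^k) (1:F) : A)
          : Unitization F A) =
          (Unitization.inrHom F F A) (∑ k ∈ s, g k • AddMonoidAlgebra.single ((m:ℚ)^k) (1:F)) :=
        rfl
      rw [hco, map_sum]
      simp only [map_smul, Unitization.inrHom_apply]
    -- linear independence of singles
    have h1 : (1:ℚ) < m := by exact_mod_cast hm.trans_lt' Nat.one_lt_two
    have hinj : Function.Injective (fun k : ℕ => ((m:ℚ)) ^ k) :=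
      fun a b hab => (pow_right_strictMono₀ h1).injective hab
    have lis : LinearIndependent F (fun k : ℕ => (Finsupp.single ((m:ℚ) ^ k) (1:F) : ℚ →₀ F)) :=
      (Finsupp.basisSingleOne (R := F) (ι := ℚ)).linearIndependent.comp _ hinj
    exact linearIndependent_iff'.mp lis s g (by simpa [AddMonoidAlgebra.coeff_sum, AddMonoidAlgebra.coeff_smul, AddMonoidAlgebra.coeff_single] using congrArg AddMonoidAlgebra.coeff hvalA) k₀ hk₀
  have hrank := li.aleph0_le_rank
  exact absurd hrank (Module.rank_lt_aleph0 F _).not_ge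
end
end

section
/- The Taft algebra H_{m²}(ζ) admits a Hopf algebra structure determined by Δ(c) = c⊗c, Δ(v) = c⊗v + v⊗1, ε(c) = 1, ε(v) = 0, with antipode S given by S(c) = c^{−1}, S(v) = −c^{−1}v. In particular Δ and ε are well-defined algebra homomorphisms on H_{m²}(ζ) and S satisfies the antipode axioms. -/
open scoped TensorProduct

/-- The defining relations of the Taft algebra: `c^m = 1`, `v^m = 0`, `vc = ζ·cv`. -/
inductive TaftRel (F : Type*) [Field F] (ζ : F) (m : ℕ) :
    FreeAlgebra F (Fin 2) → FreeAlgebra F (Fin 2) → Prop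
  | cpow : TaftRel F ζ m ((FreeAlgebra.ι F (0 : Fin 2)) ^ m) 1
  | vpow : TaftRel F ζ m ((FreeAlgebra.ι F (1 : Fin 2)) ^ m) 0
  | vc : TaftRel F ζ m (FreeAlgebra.ι F (1 : Fin 2) * FreeAlgebra.ι F (0 : Fin 2))
      (ζ • (FreeAlgebra.ι F (0 : Fin 2) * FreeAlgebra.ι F (1 : Fin 2)))

/-- The Taft algebra `H_{m²}(ζ)`. -/
abbrev TaftAlgebra (F : Type*) [Field F] (ζ : F) (m : ℕ) := RingQuot (TaftRel F ζ m)

/-- The image of the generator `c` in the Taft algebra. -/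
noncomputable def TaftAlgebra.c (F : Type*) [Field F] (ζ : F) (m : ℕ) : TaftAlgebra F ζ m :=
  RingQuot.mkAlgHom F (TaftRel F ζ m) (FreeAlgebra.ι F (0 : Fin 2))

/-- The image of the generator `v` in the Taft algebra. -/
noncomputable def TaftAlgebra.v (F : Type*) [Field F] (ζ : F) (m : ℕ) : TaftAlgebra F ζ m :=
  RingQuot.mkAlgHom F (TaftRel F ζ m) (FreeAlgebra.ι F (1 : Fin 2))


noncomputable section TaftAux

variable {F : Type*} [Field F]

/-- q-integer `[n]_q` as element of `F`. -/
def qInt (q : F) (n : ℕ) : F := ∑ i ∈ Finset.range n, q ^ i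

/-- q-factorial. -/
def qFact (q : F) : ℕ → F
  | 0 => 1
  | n + 1 => qFact q n * qInt q (n + 1)

/-- Gaussian binomial coefficient evaluated at `q`. -/
def qBinom (q : F) : ℕ → ℕ → F
  | _, 0 => 1
  | 0, _ + 1 => 0
  | n + 1, k + 1 => qBinom q n k + q ^ (k + 1) * qBinom q n (k + 1)

lemma qBinom_zero (q : F) (n : ℕ) : qBinom q n 0 = 1 := by cases n <;> rfl

lemma qBinom_eq_zero (q : F) : ∀ {n k : ℕ}, n < k → qBinom q n k = 0
  | 0, _ + 1, _ => rfl
  | n + 1, k + 1, h => by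
    rw [qBinom, qBinom_eq_zero q (by omega), qBinom_eq_zero q (by omega)]
    ring

lemma qInt_add (q : F) (a b : ℕ) : qInt q (a + b) = qInt q a + q ^ a * qInt q b := by
  induction b with
  | zero => simp [qInt]
  | succ b ih =>
    simp only [qInt] at ih ⊢
    rw [show a + (b + 1) = (a + b) + 1 from rfl, Finset.sum_range_succ,
      Finset.sum_range_succ (fun i => q ^ i) b, ih]
    ring

lemma qBinom_mul_qFact (q : F) : ∀ n k : ℕ, k ≤ n →
    qBinom q n k * (qFact q k * qFact q (n - k)) = qFact q n := by
  intro n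
  induction n with
  | zero => intro k hk; interval_cases k; simp [qBinom_zero, qFact]
  | succ n ih =>
    intro k hk
    match k with
    | 0 => simp [qBinom_zero, qFact]
    | j + 1 =>
      have hj : j ≤ n := by omega
      rw [qBinom]
      rcases eq_or_lt_of_le hk with he | hlt
      · -- j = n
        have hjn : j = n := by omega
        subst hjn
        rw [qBinom_eq_zero q (show j < j + 1 by omega), Nat.sub_self]
        have hd := ih j le_rfl
        rw [Nat.sub_self] at hd
        calc (qBinom q j j + q ^ (j + 1) * 0) * (qFact q (j + 1) * qFact q 0)
            = (qBinom q j j * (qFact q j * qFact q 0)) * qInt q (j + 1) := by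
              rw [show qFact q (j + 1) = qFact q j * qInt q (j + 1) from rfl]; ring
          _ = qFact q j * qInt q (j + 1) := by rw [hd]
          _ = qFact q (j + 1) := rfl
      · -- j + 1 ≤ n
        have hj1 : j + 1 ≤ n := by omega
        have h1 : n + 1 - (j + 1) = n - j := by omega
        have h2 : n - j = (n - (j + 1)) + 1 := by omega
        rw [h1]
        calc (qBinom q n j + q ^ (j + 1) * qBinom q n (j + 1)) *
              (qFact q (j + 1) * qFact q (n - j))
            = (qBinom q n j * (qFact q j * qFact q (n - j))) * qInt q (j + 1)
              + q ^ (j + 1) * ((qBinom q n (j + 1) *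
                  (qFact q (j + 1) * qFact q (n - (j + 1)))) * qInt q (n - j)) := by
              rw [show qFact q (j+1) = qFact q j * qInt q (j+1) from rfl,
                h2, show qFact q ((n - (j+1)) + 1) = qFact q (n - (j+1)) * qInt q ((n - (j+1)) + 1) from rfl, ← h2]
              ring
          _ = qFact q n * (qInt q (j + 1) + q ^ (j + 1) * qInt q (n - j)) := by
              rw [ih j hj, ih (j + 1) hj1]; ring
          _ = qFact q (n + 1) := by
              have h3 : qInt q (j + 1) + q ^ (j + 1) * qInt q (n - j) = qInt q (n + 1) := by
                rw [← qInt_add q (j + 1) (n - j), show (j + 1) + (n - j) = n + 1 by omega]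
              rw [h3]
              rfl
  
section
variable {q : F} {m : ℕ}

lemma qInt_m_eq_zero (hm : 2 ≤ m) (hq : IsPrimitiveRoot q m) : qInt q m = 0 := by
  have hq1 : q ≠ 1 := hq.ne_one (by omega)
  have h := geom_sum_mul q m
  rw [hq.pow_eq_one, sub_self] at h
  rcases mul_eq_zero.mp h with h' | h'
  · exact h'
  · exact absurd (sub_eq_zero.mp h') hq1

lemma qInt_ne_zero (hm : 2 ≤ m) (hq : IsPrimitiveRoot q m) {j : ℕ} (hj0 : 0 < j)
    (hj : j < m) : qInt q j ≠ 0 := by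
  have hq1 : q ≠ 1 := hq.ne_one (by omega)
  intro h
  have hgs := geom_sum_mul q j
  rw [show (∑ i ∈ Finset.range j, q ^ i) = qInt q j from rfl, h, zero_mul] at hgs
  have : q ^ j = 1 := by
    have := hgs.symm
    rwa [sub_eq_zero] at this
  exact hq.pow_ne_one_of_pos_of_lt hj0.ne' hj this

lemma qFact_ne_zero (hm : 2 ≤ m) (hq : IsPrimitiveRoot q m) :
    ∀ {j : ℕ}, j < m → qFact q j ≠ 0 := by
  intro j
  induction j with
  | zero => intro _; simp [qFact]
  | succ j ih =>
    intro hj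
    rw [show qFact q (j + 1) = qFact q j * qInt q (j + 1) from rfl]
    exact mul_ne_zero (ih (by omega)) (qInt_ne_zero hm hq (by omega) hj)

lemma qBinom_eq_zero_of_primitive (hm : 2 ≤ m) (hq : IsPrimitiveRoot q m) {k : ℕ}
    (hk0 : 0 < k) (hk : k < m) : qBinom q m k = 0 := by
  have h := qBinom_mul_qFact q m k (le_of_lt hk)
  have hfm : qFact q m = 0 := by
    obtain ⟨m', rfl⟩ : ∃ m', m = m' + 1 := ⟨m - 1, by omega⟩
    rw [show qFact q (m' + 1) = qFact q m' * qInt q (m' + 1) from rfl,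
      qInt_m_eq_zero hm hq, mul_zero]
  rw [hfm] at h
  have hne : qFact q k * qFact q (m - k) ≠ 0 :=
    mul_ne_zero (qFact_ne_zero hm hq hk) (qFact_ne_zero hm hq (by omega))
  exact (mul_eq_zero.mp h).resolve_right hne

end

section qBinomialTheorem
variable {B : Type*} [Ring B] [Algebra F B]

lemma qpow_comm {q : F} {a b : B} (h : b * a = q • (a * b)) (k : ℕ) :
    b * a ^ k = q ^ k • (a ^ k * b) := by
  induction k with
  | zero => simp
  | succ k ih =>
    rw [pow_succ, ← mul_assoc, ih, smul_mul_assoc, mul_assoc, h, mul_smul_comm,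
      smul_smul, pow_succ, ← mul_assoc]

theorem q_add_pow {q : F} {a b : B} (h : b * a = q • (a * b)) (n : ℕ) :
    (a + b) ^ n = ∑ k ∈ Finset.range (n + 1), qBinom q n k • (a ^ k * b ^ (n - k)) := by
  induction n with
  | zero => simp [qBinom_zero]
  | succ n ih =>
    have key : ∀ k, b * (a ^ k * b ^ (n - k)) = q ^ k • (a ^ k * b ^ (n - k + 1)) := by
      intro k
      rw [← mul_assoc, qpow_comm h, smul_mul_assoc, mul_assoc, ← pow_succ']
    have e1 : ∀ k ∈ Finset.range (n + 1),
        (a + b) * (qBinom q n k • (a ^ k * b ^ (n - k)))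
          = qBinom q n k • (a ^ (k + 1) * b ^ (n - k))
            + (q ^ k * qBinom q n k) • (a ^ k * b ^ (n + 1 - k)) := by
      intro k hk
      have hk' : n - k + 1 = n + 1 - k := by
        have := Finset.mem_range.mp hk; omega
      rw [add_mul, mul_smul_comm, mul_smul_comm, key k, hk', ← mul_assoc, ← pow_succ',
        smul_smul, mul_comm (qBinom q n k) (q ^ k)]
    rw [pow_succ', ih, Finset.mul_sum, Finset.sum_congr rfl e1, Finset.sum_add_distrib]
    rw [Finset.sum_range_succ'
      (fun k => qBinom q (n + 1) k • (a ^ k * b ^ (n + 1 - k))) (n + 1)]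
    rw [Finset.sum_range_succ'
      (fun k => (q ^ k * qBinom q n k) • (a ^ k * b ^ (n + 1 - k))) n]
    have hext : ∑ k ∈ Finset.range n,
        (q ^ (k + 1) * qBinom q n (k + 1)) • (a ^ (k + 1) * b ^ (n + 1 - (k + 1)))
        = ∑ k ∈ Finset.range (n + 1),
          (q ^ (k + 1) * qBinom q n (k + 1)) • (a ^ (k + 1) * b ^ (n + 1 - (k + 1))) := by
      rw [Finset.sum_range_succ, qBinom_eq_zero q (Nat.lt_succ_self n), mul_zero, zero_smul,
        add_zero]
    have hc0 : (q ^ 0 * qBinom q n 0) • ((a : B) ^ 0 * b ^ (n + 1 - 0))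
        = qBinom q (n + 1) 0 • ((a : B) ^ 0 * b ^ (n + 1 - 0)) := by
      rw [qBinom_zero, qBinom_zero, pow_zero, one_mul]
    rw [hext, hc0, ← add_assoc, ← Finset.sum_add_distrib]
    congr 1
    refine Finset.sum_congr rfl ?_
    intro j hj
    have hj' : n + 1 - (j + 1) = n - j := by omega
    rw [hj', show qBinom q (n + 1) (j + 1) = qBinom q n j + q ^ (j + 1) * qBinom q n (j + 1)
      from rfl, add_smul]

theorem q_add_pow_eq_zero {q : F} {a b : B} (h : b * a = q • (a * b)) {m : ℕ} (hm : 2 ≤ m)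
    (hq : IsPrimitiveRoot q m) (ha : a ^ m = 0) (hb : b ^ m = 0) : (a + b) ^ m = 0 := by
  rw [q_add_pow h m]
  refine Finset.sum_eq_zero ?_
  intro k hk
  have hk' : k ≤ m := by have := Finset.mem_range.mp hk; omega
  rcases Nat.eq_zero_or_pos k with rfl | hk0
  · simp [hb]
  · rcases eq_or_lt_of_le hk' with rfl | hlt
    · simp [ha, qBinom_eq_zero]
    · rw [qBinom_eq_zero_of_primitive hm hq hk0 hlt, zero_smul]

end qBinomialTheorem

end TaftAux

noncomputable section TaftHopfAux

variable {F : Type*} [Field F] {ζ : F} {m : ℕ}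

namespace TaftHopf

local notation "c'" => TaftAlgebra.c F ζ m
local notation "v'" => TaftAlgebra.v F ζ m

lemma c_pow : c' ^ m = 1 := by
  have h := RingQuot.mkAlgHom_rel F (TaftRel.cpow (F := F) (ζ := ζ) (m := m))
  simpa [TaftAlgebra.c, map_pow] using h

lemma v_pow : v' ^ m = 0 := by
  have h := RingQuot.mkAlgHom_rel F (TaftRel.vpow (F := F) (ζ := ζ) (m := m))
  simpa [TaftAlgebra.v, map_pow] using h

lemma vc : v' * c' = ζ • (c' * v') := by
  have h := RingQuot.mkAlgHom_rel F (TaftRel.vc (F := F) (ζ := ζ) (m := m))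
  simpa [TaftAlgebra.c, TaftAlgebra.v, map_mul, map_smul] using h

lemma v_cpow (k : ℕ) : v' * c' ^ k = ζ ^ k • (c' ^ k * v') := by
  induction k with
  | zero => simp
  | succ k ih =>
    rw [pow_succ, ← mul_assoc, ih, smul_mul_assoc, mul_assoc, vc, mul_smul_comm, smul_smul,
      pow_succ, ← mul_assoc]

lemma cpow_mul_v_pow (k : ℕ) : ∀ n : ℕ, ∃ s : F, (c' ^ k * v') ^ n = s • (c' ^ (k * n) * v' ^ n)
  | 0 => ⟨1, by simp⟩
  | n + 1 => by
    obtain ⟨s, hs⟩ := cpow_mul_v_pow k n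
    refine ⟨s * ζ ^ (k * n), ?_⟩
    rw [pow_succ', hs, mul_smul_comm, ← mul_assoc, mul_assoc (c' ^ k) (v') (c' ^ (k * n)),
      v_cpow, mul_smul_comm, smul_mul_assoc, smul_smul]
    rw [show k * (n + 1) = k + k * n by ring, show n + 1 = 1 + n by ring, pow_add, pow_add,
      pow_one]
    simp only [mul_assoc]

lemma algHom_ext {B : Type*} [Semiring B] [Algebra F B]
    {f g : TaftAlgebra F ζ m →ₐ[F] B}
    (hgc : f c' = g c') (hgv : f v' = g v') : f = g := by
  apply RingQuot.ringQuot_ext'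
  apply FreeAlgebra.hom_ext
  funext i
  fin_cases i
  · exact hgc
  · exact hgv

lemma adjoin_top : Algebra.adjoin F {c', v'} = ⊤ := by
  rw [eq_top_iff]
  rintro x -
  obtain ⟨y, rfl⟩ := RingQuot.mkAlgHom_surjective F (TaftRel F ζ m) x
  induction y using FreeAlgebra.induction with
  | grade0 r =>
    rw [AlgHom.commutes]
    exact Subalgebra.algebraMap_mem _ r
  | grade1 i =>
    fin_cases i
    · exact Algebra.subset_adjoin (Set.mem_insert _ _)
    · exact Algebra.subset_adjoin (Set.mem_insert_of_mem _ rfl)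
  | mul a b ha hb => rw [map_mul]; exact mul_mem ha hb
  | add a b ha hb => rw [map_add]; exact add_mem ha hb

end TaftHopf

end TaftHopfAux

set_option maxHeartbeats 3000000 in
/-- The Taft algebra `H_{m²}(ζ)` admits a Hopf algebra structure determined by
`Δ(c) = c⊗c`, `Δ(v) = c⊗v + v⊗1`, `ε(c) = 1`, `ε(v) = 0`, with antipode `S` given by
`S(c) = c⁻¹ = c^{m−1}` and `S(v) = −c^{−1}v`.  In particular `Δ` and `ε` are well-defined
algebra homomorphisms on `H_{m²}(ζ)` (so the defining relations are respected), they are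
coassociative and counital, and `S` satisfies the antipode axioms. -/
theorem taftAlgebra_hopf (F : Type*) [Field F] (ζ : F) (m : ℕ) (hm : 2 ≤ m)
    (hζ : IsPrimitiveRoot ζ m) :
    ∃ (Δ : TaftAlgebra F ζ m →ₐ[F] TaftAlgebra F ζ m ⊗[F] TaftAlgebra F ζ m)
      (ε : TaftAlgebra F ζ m →ₐ[F] F)
      (S : TaftAlgebra F ζ m →ₗ[F] TaftAlgebra F ζ m),
      -- values of the comultiplication on the generators
      Δ (TaftAlgebra.c F ζ m) = TaftAlgebra.c F ζ m ⊗ₜ[F] TaftAlgebra.c F ζ m ∧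
      Δ (TaftAlgebra.v F ζ m) =
        TaftAlgebra.c F ζ m ⊗ₜ[F] TaftAlgebra.v F ζ m + TaftAlgebra.v F ζ m ⊗ₜ[F] 1 ∧
      -- values of the counit on the generators
      ε (TaftAlgebra.c F ζ m) = 1 ∧
      ε (TaftAlgebra.v F ζ m) = 0 ∧
      -- coassociativity
      (∀ x : TaftAlgebra F ζ m,
        Algebra.TensorProduct.assoc F F F (TaftAlgebra F ζ m) (TaftAlgebra F ζ m)
            (TaftAlgebra F ζ m)
            (Algebra.TensorProduct.map Δ (AlgHom.id F (TaftAlgebra F ζ m)) (Δ x)) =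
          Algebra.TensorProduct.map (AlgHom.id F (TaftAlgebra F ζ m)) Δ (Δ x)) ∧
      -- counit axioms
      (∀ x : TaftAlgebra F ζ m,
        TensorProduct.lid F (TaftAlgebra F ζ m)
          (TensorProduct.map ε.toLinearMap LinearMap.id (Δ x)) = x) ∧
      (∀ x : TaftAlgebra F ζ m,
        TensorProduct.rid F (TaftAlgebra F ζ m)
          (TensorProduct.map LinearMap.id ε.toLinearMap (Δ x)) = x) ∧
      -- values of the antipode on the generators (`c⁻¹ = c^{m−1}`)
      S (TaftAlgebra.c F ζ m) = TaftAlgebra.c F ζ m ^ (m - 1) ∧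
      S (TaftAlgebra.v F ζ m) = -(TaftAlgebra.c F ζ m ^ (m - 1) * TaftAlgebra.v F ζ m) ∧
      -- antipode axioms
      (∀ x : TaftAlgebra F ζ m,
        LinearMap.mul' F (TaftAlgebra F ζ m)
          (TensorProduct.map S LinearMap.id (Δ x)) = ε x • 1) ∧
      (∀ x : TaftAlgebra F ζ m,
        LinearMap.mul' F (TaftAlgebra F ζ m)
          (TensorProduct.map LinearMap.id S (Δ x)) = ε x • 1) := by
  classical
  have hm0 : m ≠ 0 := by omega
  have hm1 : m - 1 + 1 = m := by omega
  have hc : (TaftAlgebra.c F ζ m) ^ m = 1 := TaftHopf.c_pow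
  have hv : (TaftAlgebra.v F ζ m) ^ m = 0 := TaftHopf.v_pow
  have hvc : (TaftAlgebra.v F ζ m) * (TaftAlgebra.c F ζ m) = ζ • ((TaftAlgebra.c F ζ m) * (TaftAlgebra.v F ζ m)) := TaftHopf.vc
  have hvck : ∀ k : ℕ, (TaftAlgebra.v F ζ m) * (TaftAlgebra.c F ζ m) ^ k = ζ ^ k • ((TaftAlgebra.c F ζ m) ^ k * (TaftAlgebra.v F ζ m)) := fun k => TaftHopf.v_cpow k
  have hcC : (TaftAlgebra.c F ζ m) ^ (m - 1) * (TaftAlgebra.c F ζ m) = 1 := by rw [← pow_succ, hm1, hc]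
  have hCc : (TaftAlgebra.c F ζ m) * (TaftAlgebra.c F ζ m) ^ (m - 1) = 1 := by rw [← pow_succ', hm1, hc]
  have Hmn : ∀ a b : (TaftAlgebra F ζ m), a * -b = -(a * b) := fun a b => mul_neg a b
  have Hnm : ∀ a b : (TaftAlgebra F ζ m), -a * b = -(a * b) := fun a b => neg_mul a b
  have Hsn : ∀ (r : F) (a : (TaftAlgebra F ζ m)), r • -a = -(r • a) := fun r a => smul_neg r a
  have Hnp : ∀ (a : (TaftAlgebra F ζ m)) (n : ℕ), (-a) ^ n = (-1) ^ n * a ^ n := fun a n => neg_pow a n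
  have Hnac : ∀ a : (TaftAlgebra F ζ m), -a + a = 0 := fun a => neg_add_cancel a
  have Hanc : ∀ a : (TaftAlgebra F ζ m), a + -a = 0 := fun a => add_neg_cancel a
  have Hna : ∀ a b : (TaftAlgebra F ζ m), -(a + b) = -a + -b := fun a b => neg_add a b
  -- the comultiplication
  have hΔrel : ∀ ⦃x y⦄, TaftRel F ζ m x y →
      FreeAlgebra.lift F ![(TaftAlgebra.c F ζ m) ⊗ₜ[F] (TaftAlgebra.c F ζ m), (TaftAlgebra.c F ζ m) ⊗ₜ[F] (TaftAlgebra.v F ζ m) + (TaftAlgebra.v F ζ m) ⊗ₜ[F] (1 : (TaftAlgebra F ζ m))] x =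
      FreeAlgebra.lift F ![(TaftAlgebra.c F ζ m) ⊗ₜ[F] (TaftAlgebra.c F ζ m), (TaftAlgebra.c F ζ m) ⊗ₜ[F] (TaftAlgebra.v F ζ m) + (TaftAlgebra.v F ζ m) ⊗ₜ[F] (1 : (TaftAlgebra F ζ m))] y := by
    intro x y r
    cases r with
    | cpow =>
      simp only [map_pow, map_one, FreeAlgebra.lift_ι_apply, Matrix.cons_val_zero]
      rw [Algebra.TensorProduct.tmul_pow, hc, Algebra.TensorProduct.one_def]
    | vpow =>
      simp only [map_pow, map_zero, FreeAlgebra.lift_ι_apply, Matrix.cons_val_one,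
        Matrix.head_cons]
      refine q_add_pow_eq_zero (q := ζ) (a := (TaftAlgebra.c F ζ m) ⊗ₜ[F] (TaftAlgebra.v F ζ m)) (b := (TaftAlgebra.v F ζ m) ⊗ₜ[F] (1 : (TaftAlgebra F ζ m))) ?_ hm hζ ?_ ?_
      · rw [Algebra.TensorProduct.tmul_mul_tmul, Algebra.TensorProduct.tmul_mul_tmul, hvc,
          one_mul, mul_one, TensorProduct.smul_tmul']
      · rw [Algebra.TensorProduct.tmul_pow, hv, TensorProduct.tmul_zero]
      · rw [Algebra.TensorProduct.tmul_pow, hv, one_pow, TensorProduct.zero_tmul]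
    | vc =>
      simp only [map_mul, map_smul, FreeAlgebra.lift_ι_apply, Matrix.cons_val_zero,
        Matrix.cons_val_one, Matrix.head_cons]
      simp [Algebra.TensorProduct.tmul_mul_tmul, add_mul, mul_add, hvc,
        TensorProduct.smul_tmul', TensorProduct.tmul_smul, smul_add]
  obtain ⟨Δ, hΔc, hΔv⟩ : ∃ Δ : (TaftAlgebra F ζ m) →ₐ[F] (TaftAlgebra F ζ m) ⊗[F] (TaftAlgebra F ζ m),
      Δ (TaftAlgebra.c F ζ m) = (TaftAlgebra.c F ζ m) ⊗ₜ[F] (TaftAlgebra.c F ζ m) ∧ Δ (TaftAlgebra.v F ζ m) = (TaftAlgebra.c F ζ m) ⊗ₜ[F] (TaftAlgebra.v F ζ m) + (TaftAlgebra.v F ζ m) ⊗ₜ[F] (1 : (TaftAlgebra F ζ m)) := by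
    refine ⟨RingQuot.liftAlgHom F
      ⟨FreeAlgebra.lift F ![(TaftAlgebra.c F ζ m) ⊗ₜ[F] (TaftAlgebra.c F ζ m), (TaftAlgebra.c F ζ m) ⊗ₜ[F] (TaftAlgebra.v F ζ m) + (TaftAlgebra.v F ζ m) ⊗ₜ[F] (1 : (TaftAlgebra F ζ m))], hΔrel⟩,
      ?_, ?_⟩ <;>
    · simp only [TaftAlgebra.c, TaftAlgebra.v]
      rw [RingQuot.liftAlgHom_mkAlgHom_apply, FreeAlgebra.lift_ι_apply]
      simp
  -- the counit
  have hεrel : ∀ ⦃x y⦄, TaftRel F ζ m x y →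
      FreeAlgebra.lift F ![(1 : F), (0 : F)] x = FreeAlgebra.lift F ![(1 : F), (0 : F)] y := by
    intro x y r
    cases r with
    | cpow => simp
    | vpow => simp [zero_pow hm0]
    | vc => simp
  obtain ⟨ε, hεc, hεv⟩ : ∃ ε : (TaftAlgebra F ζ m) →ₐ[F] F, ε (TaftAlgebra.c F ζ m) = 1 ∧ ε (TaftAlgebra.v F ζ m) = 0 := by
    refine ⟨RingQuot.liftAlgHom F ⟨FreeAlgebra.lift F ![(1 : F), (0 : F)], hεrel⟩, ?_, ?_⟩ <;>
    · simp only [TaftAlgebra.c, TaftAlgebra.v]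
      rw [RingQuot.liftAlgHom_mkAlgHom_apply, FreeAlgebra.lift_ι_apply]
      simp
  -- the antipode, as an algebra map to the opposite algebra
  have hSrel : ∀ ⦃x y⦄, TaftRel F ζ m x y →
      FreeAlgebra.lift F ![MulOpposite.op ((TaftAlgebra.c F ζ m) ^ (m - 1)),
        MulOpposite.op (-((TaftAlgebra.c F ζ m) ^ (m - 1) * (TaftAlgebra.v F ζ m)))] x =
      FreeAlgebra.lift F ![MulOpposite.op ((TaftAlgebra.c F ζ m) ^ (m - 1)),
        MulOpposite.op (-((TaftAlgebra.c F ζ m) ^ (m - 1) * (TaftAlgebra.v F ζ m)))] y := by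
    intro x y r
    cases r with
    | cpow =>
      simp only [map_pow, map_one, FreeAlgebra.lift_ι_apply, Matrix.cons_val_zero]
      rw [← MulOpposite.op_pow, ← pow_mul, mul_comm, pow_mul, hc, one_pow, MulOpposite.op_one]
    | vpow =>
      simp only [map_pow, map_zero, FreeAlgebra.lift_ι_apply, Matrix.cons_val_one,
        Matrix.head_cons, Matrix.cons_val_zero]
      obtain ⟨s, hs⟩ := TaftHopf.cpow_mul_v_pow (F := F) (ζ := ζ) (m := m) (m - 1) m
      rw [← MulOpposite.op_pow, Hnp, hs, hv, mul_zero, smul_zero, mul_zero,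
        MulOpposite.op_zero]
    | vc =>
      simp only [map_mul, map_smul, FreeAlgebra.lift_ι_apply, Matrix.cons_val_zero,
        Matrix.cons_val_one, Matrix.head_cons]
      rw [← MulOpposite.op_mul, ← MulOpposite.op_mul, ← MulOpposite.op_smul]
      congr 1
      rw [Hmn, Hnm, Hsn]
      congr 1
      rw [mul_assoc ((TaftAlgebra.c F ζ m) ^ (m - 1)) (TaftAlgebra.v F ζ m) ((TaftAlgebra.c F ζ m) ^ (m - 1)), hvck, mul_smul_comm, smul_smul,
        ← pow_succ', hm1, hζ.pow_eq_one, one_smul]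
  obtain ⟨Sop, hSopc, hSopv⟩ : ∃ Sop : (TaftAlgebra F ζ m) →ₐ[F] (TaftAlgebra F ζ m)ᵐᵒᵖ,
      Sop (TaftAlgebra.c F ζ m) = MulOpposite.op ((TaftAlgebra.c F ζ m) ^ (m - 1)) ∧
      Sop (TaftAlgebra.v F ζ m) = MulOpposite.op (-((TaftAlgebra.c F ζ m) ^ (m - 1) * (TaftAlgebra.v F ζ m))) := by
    refine ⟨RingQuot.liftAlgHom F
      ⟨FreeAlgebra.lift F ![MulOpposite.op ((TaftAlgebra.c F ζ m) ^ (m - 1)),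
        MulOpposite.op (-((TaftAlgebra.c F ζ m) ^ (m - 1) * (TaftAlgebra.v F ζ m)))], hSrel⟩, ?_, ?_⟩ <;>
    · simp only [TaftAlgebra.c, TaftAlgebra.v]
      rw [RingQuot.liftAlgHom_mkAlgHom_apply, FreeAlgebra.lift_ι_apply]
      simp
  obtain ⟨S, hSc, hSv, hSanti, hS1⟩ : ∃ S : (TaftAlgebra F ζ m) →ₗ[F] (TaftAlgebra F ζ m),
      S (TaftAlgebra.c F ζ m) = (TaftAlgebra.c F ζ m) ^ (m - 1) ∧ S (TaftAlgebra.v F ζ m) = -((TaftAlgebra.c F ζ m) ^ (m - 1) * (TaftAlgebra.v F ζ m)) ∧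
      (∀ x y : (TaftAlgebra F ζ m), S (x * y) = S y * S x) ∧ S (1 : (TaftAlgebra F ζ m)) = 1 := by
    refine ⟨(MulOpposite.opLinearEquiv F (M := (TaftAlgebra F ζ m))).symm.toLinearMap.comp Sop.toLinearMap,
      ?_, ?_, ?_, ?_⟩
    · show MulOpposite.unop (Sop (TaftAlgebra.c F ζ m)) = _
      rw [hSopc, MulOpposite.unop_op]
    · show MulOpposite.unop (Sop (TaftAlgebra.v F ζ m)) = _
      rw [hSopv, MulOpposite.unop_op]
    · intro x y
      show MulOpposite.unop (Sop (x * y)) = MulOpposite.unop (Sop y) * MulOpposite.unop (Sop x)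
      rw [map_mul, MulOpposite.unop_mul]
    · show MulOpposite.unop (Sop 1) = 1
      rw [map_one, MulOpposite.unop_one]
  have hSmulc : ∀ a : (TaftAlgebra F ζ m), S (a * (TaftAlgebra.c F ζ m)) = (TaftAlgebra.c F ζ m) ^ (m - 1) * S a := by
    intro a; rw [hSanti, hSc]
  have hSmulv : ∀ a : (TaftAlgebra F ζ m), S (a * (TaftAlgebra.v F ζ m)) = -((TaftAlgebra.c F ζ m) ^ (m - 1) * (TaftAlgebra.v F ζ m)) * S a := by
    intro a; rw [hSanti, hSv]
  refine ⟨Δ, ε, S, hΔc, hΔv, hεc, hεv, ?_, ?_, ?_, hSc, hSv, ?_, ?_⟩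
  · -- coassociativity
    have hco : ((Algebra.TensorProduct.assoc F F F (TaftAlgebra F ζ m) (TaftAlgebra F ζ m) (TaftAlgebra F ζ m)).toAlgHom.comp
        ((Algebra.TensorProduct.map Δ (AlgHom.id F (TaftAlgebra F ζ m))).comp Δ)) =
        (Algebra.TensorProduct.map (AlgHom.id F (TaftAlgebra F ζ m)) Δ).comp Δ := by
      apply TaftHopf.algHom_ext
      · simp [hΔc, hΔv]
      · simp [hΔc, hΔv, TensorProduct.add_tmul, TensorProduct.tmul_add,
          Algebra.TensorProduct.one_def, add_assoc]
    intro x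
    simpa using AlgHom.congr_fun hco x
  · -- left counit
    have hεΔ : ((Algebra.TensorProduct.lid F (TaftAlgebra F ζ m)).toAlgHom.comp
        ((Algebra.TensorProduct.map ε (AlgHom.id F (TaftAlgebra F ζ m))).comp Δ)) = AlgHom.id F (TaftAlgebra F ζ m) := by
      apply TaftHopf.algHom_ext
      · simp [hΔc, hΔv, hεc, hεv]
      · simp [hΔc, hΔv, hεc, hεv, TensorProduct.add_tmul]
    intro x
    have hbr : ∀ t : (TaftAlgebra F ζ m) ⊗[F] (TaftAlgebra F ζ m),
        TensorProduct.lid F (TaftAlgebra F ζ m) (TensorProduct.map ε.toLinearMap LinearMap.id t) =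
        Algebra.TensorProduct.lid F (TaftAlgebra F ζ m) (Algebra.TensorProduct.map ε (AlgHom.id F (TaftAlgebra F ζ m)) t) := by
      intro t
      induction t using TensorProduct.induction_on with
      | zero => simp
      | tmul a b => simp
      | add p q hp hq => simp [hp, hq]
    rw [hbr (Δ x)]
    simpa using AlgHom.congr_fun hεΔ x
  · -- right counit
    have hεΔ : ((Algebra.TensorProduct.rid F F (TaftAlgebra F ζ m)).toAlgHom.comp
        ((Algebra.TensorProduct.map (AlgHom.id F (TaftAlgebra F ζ m)) ε).comp Δ)) = AlgHom.id F (TaftAlgebra F ζ m) := by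
      apply TaftHopf.algHom_ext
      · simp [hΔc, hΔv, hεc, hεv]
      · simp [hΔc, hΔv, hεc, hεv, TensorProduct.add_tmul]
    intro x
    have hbr : ∀ t : (TaftAlgebra F ζ m) ⊗[F] (TaftAlgebra F ζ m),
        TensorProduct.rid F (TaftAlgebra F ζ m) (TensorProduct.map LinearMap.id ε.toLinearMap t) =
        Algebra.TensorProduct.rid F F (TaftAlgebra F ζ m) (Algebra.TensorProduct.map (AlgHom.id F (TaftAlgebra F ζ m)) ε t) := by
      intro t
      induction t using TensorProduct.induction_on with
      | zero => simp
      | tmul a b => simp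
      | add p q hp hq => simp [hp, hq]
    rw [hbr (Δ x)]
    simpa using AlgHom.congr_fun hεΔ x
  · -- left antipode axiom
    have hMt : ∀ a b : (TaftAlgebra F ζ m),
        LinearMap.mul' F (TaftAlgebra F ζ m) (TensorProduct.map S LinearMap.id (a ⊗ₜ[F] b)) = S a * b := by
      intro a b; simp
    have hM1 : ∀ t : (TaftAlgebra F ζ m) ⊗[F] (TaftAlgebra F ζ m),
        LinearMap.mul' F (TaftAlgebra F ζ m) (TensorProduct.map S LinearMap.id (t * ((TaftAlgebra.c F ζ m) ⊗ₜ[F] (TaftAlgebra.c F ζ m)))) =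
        (TaftAlgebra.c F ζ m) ^ (m - 1) * LinearMap.mul' F (TaftAlgebra F ζ m) (TensorProduct.map S LinearMap.id t) * (TaftAlgebra.c F ζ m) := by
      intro t
      induction t using TensorProduct.induction_on with
      | zero => simp
      | tmul a b =>
        rw [Algebra.TensorProduct.tmul_mul_tmul, hMt, hMt, hSmulc]
        simp [mul_assoc]
      | add p q hp hq =>
        rw [add_mul, map_add, map_add, hp, hq, map_add, map_add, mul_add, add_mul]
    have hM2 : ∀ t : (TaftAlgebra F ζ m) ⊗[F] (TaftAlgebra F ζ m),
        LinearMap.mul' F (TaftAlgebra F ζ m) (TensorProduct.map S LinearMap.id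
          (t * ((TaftAlgebra.c F ζ m) ⊗ₜ[F] (TaftAlgebra.v F ζ m) + (TaftAlgebra.v F ζ m) ⊗ₜ[F] (1 : (TaftAlgebra F ζ m))))) =
        (TaftAlgebra.c F ζ m) ^ (m - 1) * (LinearMap.mul' F (TaftAlgebra F ζ m) (TensorProduct.map S LinearMap.id t) * (TaftAlgebra.v F ζ m))
          + -((TaftAlgebra.c F ζ m) ^ (m - 1) * ((TaftAlgebra.v F ζ m) * LinearMap.mul' F (TaftAlgebra F ζ m) (TensorProduct.map S LinearMap.id t))) := by
      intro t
      induction t using TensorProduct.induction_on with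
      | zero => simp
      | tmul a b =>
        rw [mul_add, Algebra.TensorProduct.tmul_mul_tmul, Algebra.TensorProduct.tmul_mul_tmul,
          map_add, map_add, hMt, hMt, hSmulc, hSmulv, mul_one, Hnm, Hnm]
        congr 1
        · simp [mul_assoc]
        · congr 1
          simp [mul_assoc]
      | add p q hp hq =>
        rw [add_mul, map_add, map_add, hp, hq, map_add, map_add, add_mul, mul_add,
          mul_add ((TaftAlgebra.v F ζ m)), mul_add ((TaftAlgebra.c F ζ m) ^ (m - 1)), Hna, add_add_add_comm]
    have key : ∀ y, y ∈ Algebra.adjoin F {(TaftAlgebra.c F ζ m), (TaftAlgebra.v F ζ m)} → ∀ x : (TaftAlgebra F ζ m),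
        LinearMap.mul' F (TaftAlgebra F ζ m) (TensorProduct.map S LinearMap.id (Δ x)) = ε x • 1 →
        LinearMap.mul' F (TaftAlgebra F ζ m) (TensorProduct.map S LinearMap.id (Δ (x * y))) = ε (x * y) • 1 := by
      intro y hy
      induction hy using Algebra.adjoin_induction with
      | mem z hz =>
        rw [Set.mem_insert_iff, Set.mem_singleton_iff] at hz
        rcases hz with rfl | rfl
        · intro x hx
          rw [map_mul, hΔc, hM1, hx, map_mul, hεc, mul_one, mul_smul_comm, smul_mul_assoc,
            mul_one, hcC]
        · intro x hx
          rw [map_mul, hΔv, hM2, hx, map_mul, hεv, mul_zero, zero_smul, smul_mul_assoc,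
            one_mul, mul_smul_comm, mul_smul_comm, mul_one, mul_smul_comm]
          exact Hanc _
      | algebraMap r =>
        intro x hx
        have hxr : x * algebraMap F (TaftAlgebra F ζ m) r = r • x := by
          rw [← Algebra.commutes, ← Algebra.smul_def]
        rw [hxr, map_smul, map_smul, map_smul, hx, map_smul, smul_smul, smul_eq_mul]
      | add y z hy1 hz1 ihy ihz =>
        intro x hx
        rw [mul_add, map_add, map_add, map_add, ihy x hx, ihz x hx, map_add, add_smul]
      | mul y z hy1 hz1 ihy ihz =>
        intro x hx
        rw [← mul_assoc]
        exact ihz _ (ihy _ hx)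
    intro x
    have h1 : LinearMap.mul' F (TaftAlgebra F ζ m)
        (TensorProduct.map S LinearMap.id (Δ (1 : (TaftAlgebra F ζ m)))) = ε (1 : (TaftAlgebra F ζ m)) • 1 := by
      rw [map_one, Algebra.TensorProduct.one_def, hMt, hS1, one_mul, map_one, one_smul]
    have hxadj : x ∈ Algebra.adjoin F {(TaftAlgebra.c F ζ m), (TaftAlgebra.v F ζ m)} := by rw [TaftHopf.adjoin_top]; trivial
    have := key x hxadj 1 h1
    simpa using this
  · -- right antipode axiom
    have hNt : ∀ a b : (TaftAlgebra F ζ m),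
        LinearMap.mul' F (TaftAlgebra F ζ m) (TensorProduct.map LinearMap.id S (a ⊗ₜ[F] b)) = a * S b := by
      intro a b; simp
    have hN1 : ∀ t : (TaftAlgebra F ζ m) ⊗[F] (TaftAlgebra F ζ m),
        LinearMap.mul' F (TaftAlgebra F ζ m) (TensorProduct.map LinearMap.id S (t * ((TaftAlgebra.c F ζ m) ⊗ₜ[F] (TaftAlgebra.c F ζ m)))) =
        LinearMap.mul' F (TaftAlgebra F ζ m) (TensorProduct.map LinearMap.id S t) := by
      intro t
      induction t using TensorProduct.induction_on with
      | zero => simp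
      | tmul a b =>
        rw [Algebra.TensorProduct.tmul_mul_tmul, hNt, hNt, hSmulc, mul_assoc,
          ← mul_assoc (TaftAlgebra.c F ζ m) ((TaftAlgebra.c F ζ m) ^ (m - 1)) (S b), hCc, one_mul]
      | add p q hp hq =>
        rw [add_mul, map_add, map_add, hp, hq, map_add, map_add]
    have hN2 : ∀ t : (TaftAlgebra F ζ m) ⊗[F] (TaftAlgebra F ζ m),
        LinearMap.mul' F (TaftAlgebra F ζ m) (TensorProduct.map LinearMap.id S
          (t * ((TaftAlgebra.c F ζ m) ⊗ₜ[F] (TaftAlgebra.v F ζ m) + (TaftAlgebra.v F ζ m) ⊗ₜ[F] (1 : (TaftAlgebra F ζ m))))) = 0 := by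
      intro t
      induction t using TensorProduct.induction_on with
      | zero => simp
      | tmul a b =>
        rw [mul_add, Algebra.TensorProduct.tmul_mul_tmul, Algebra.TensorProduct.tmul_mul_tmul,
          map_add, map_add, hNt, hNt, hSmulv, mul_one, Hnm, Hmn,
          show a * (TaftAlgebra.c F ζ m) * ((TaftAlgebra.c F ζ m) ^ (m - 1) * (TaftAlgebra.v F ζ m) * S b)
              = a * (((TaftAlgebra.c F ζ m) * (TaftAlgebra.c F ζ m) ^ (m - 1)) * ((TaftAlgebra.v F ζ m) * S b)) by
            simp [mul_assoc],
          hCc, one_mul, ← mul_assoc a (TaftAlgebra.v F ζ m) (S b), Hnac]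
      | add p q hp hq =>
        rw [add_mul, map_add, map_add, hp, hq, add_zero]
    have key : ∀ y, y ∈ Algebra.adjoin F {(TaftAlgebra.c F ζ m), (TaftAlgebra.v F ζ m)} → ∀ x : (TaftAlgebra F ζ m),
        LinearMap.mul' F (TaftAlgebra F ζ m) (TensorProduct.map LinearMap.id S (Δ x)) = ε x • 1 →
        LinearMap.mul' F (TaftAlgebra F ζ m) (TensorProduct.map LinearMap.id S (Δ (x * y))) = ε (x * y) • 1 := by
      intro y hy
      induction hy using Algebra.adjoin_induction with
      | mem z hz =>
        rw [Set.mem_insert_iff, Set.mem_singleton_iff] at hz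
        rcases hz with rfl | rfl
        · intro x hx
          rw [map_mul, hΔc, hN1, hx, map_mul, hεc, mul_one]
        · intro x hx
          rw [map_mul, hΔv, hN2, map_mul, hεv, mul_zero, zero_smul]
      | algebraMap r =>
        intro x hx
        have hxr : x * algebraMap F (TaftAlgebra F ζ m) r = r • x := by
          rw [← Algebra.commutes, ← Algebra.smul_def]
        rw [hxr, map_smul, map_smul, map_smul, hx, map_smul, smul_smul, smul_eq_mul]
      | add y z hy1 hz1 ihy ihz =>
        intro x hx
        rw [mul_add, map_add, map_add, map_add, ihy x hx, ihz x hx, map_add, add_smul]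
      | mul y z hy1 hz1 ihy ihz =>
        intro x hx
        rw [← mul_assoc]
        exact ihz _ (ihy _ hx)
    intro x
    have h1 : LinearMap.mul' F (TaftAlgebra F ζ m)
        (TensorProduct.map LinearMap.id S (Δ (1 : (TaftAlgebra F ζ m)))) = ε (1 : (TaftAlgebra F ζ m)) • 1 := by
      rw [map_one, Algebra.TensorProduct.one_def, hNt, hS1, mul_one, map_one, one_smul]
    have hxadj : x ∈ Algebra.adjoin F {(TaftAlgebra.c F ζ m), (TaftAlgebra.v F ζ m)} := by rw [TaftHopf.adjoin_top]; trivial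
    have := key x hxadj 1 h1
    simpa using this
end

section
/- Let A be a finite-dimensional T-graded algebra over a field F, where T is a semigroup. Then for all n ∈ ℕ, the n-th codimension of graded polynomial identities equals the n-th codimension of (FT)*-identities: c_n^{T-gr}(A) = c_n^{(FT)*}(A). -/
noncomputable section

/-- We model the free `T`-graded polynomial algebra (with adjoined unit) as the tensor
algebra on the graded variables `x_i^t`, `i ∈ ℕ`, `t ∈ T`. -/
abbrev FreeGrAlg (F : Type*) [Field F] (T : Type*) := TensorAlgebra F (ℕ × T →₀ F)

/-- The evaluation homomorphism attached to a graded substitution `ψ`, sending the graded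
variable `x_i^t` to `ψ (i, t)` (values in the unitalization `A⁺`). -/
def evalGr (F : Type*) [Field F] (T : Type*)
    (A : Type*) [NonUnitalRing A] [Module F A] [SMulCommClass F A A] [IsScalarTower F A A]
    (ψ : ℕ × T → A) : FreeGrAlg F T →ₐ[F] Unitization F A :=
  TensorAlgebra.lift F ((Unitization.inrHom F F A).comp
    (Finsupp.lsum F fun p => LinearMap.toSpanSingleton F A (ψ p)))

/-- The space of graded polynomial identities of a `T`-graded algebra `A = ⊕_t A^{(t)}`:
those elements killed by every graded substitution (each `x_i^t` is evaluated in the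
homogeneous component `A^{(t)}`). -/
def IdGr (F : Type*) [Field F] (T : Type*)
    (A : Type*) [NonUnitalRing A] [Module F A] [SMulCommClass F A A] [IsScalarTower F A A]
    (𝒜 : T → Submodule F A) : Submodule F (FreeGrAlg F T) :=
  ⨅ ψ : {ψ : ℕ × T → A // ∀ (i : ℕ) (t : T), ψ (i, t) ∈ 𝒜 t},
    LinearMap.ker (evalGr F T A ψ.1).toLinearMap

/-- The space of multilinear graded polynomials in `x_1, …, x_n`, spanned by the
monomials `x^{t₁}_{σ(1)} ⋯ x^{tₙ}_{σ(n)}`. -/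
def PnGr (F : Type*) [Field F] (T : Type*) (n : ℕ) : Submodule F (FreeGrAlg F T) :=
  Submodule.span F {f | ∃ (σ : Equiv.Perm (Fin n)) (t : Fin n → T),
    f = (List.ofFn fun j => TensorAlgebra.ι F
          (Finsupp.single (((σ j : Fin n) : ℕ), t j) (1 : F))).prod}

/-- The map `x_i^t ↦ x_i^{1_t}` from the free graded algebra to the free `(FT)*`-algebra. -/
def grToH (F : Type*) [Field F] (T : Type*) [DecidableEq T] :
    FreeGrAlg F T →ₐ[F] FreeHPolyAlg F (T → F) :=
  TensorAlgebra.lift F ((TensorAlgebra.ι F (M := ℕ →₀ (T → F))).comp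
    (Finsupp.lsum F fun p => (Finsupp.lsingle p.1).comp
      (LinearMap.toSpanSingleton F (T → F) (Pi.single p.2 1))))

theorem grToH_ι (F : Type*) [Field F] (T : Type*) [DecidableEq T] (p : ℕ × T) (c : F) :
    grToH F T (TensorAlgebra.ι F (Finsupp.single p c)) =
      TensorAlgebra.ι F (Finsupp.single p.1 (c • (Pi.single p.2 (1 : F) : T → F))) := by
  simp [grToH]

theorem evalH_ι (F : Type*) [Field F]
    (A : Type*) [NonUnitalRing A] [Module F A] [SMulCommClass F A A] [IsScalarTower F A A]
    (H : Type*) [Ring H] [Algebra F H] (ρ : H →ₐ[F] Module.End F A) (ψ : ℕ → A)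
    (i : ℕ) (h : H) :
    evalH F A H ρ ψ (TensorAlgebra.ι F (Finsupp.single i h)) =
      Unitization.inr (ρ h (ψ i)) := by
  simp [evalH]

theorem evalGr_ι (F : Type*) [Field F] (T : Type*)
    (A : Type*) [NonUnitalRing A] [Module F A] [SMulCommClass F A A] [IsScalarTower F A A]
    (ψ : ℕ × T → A) (p : ℕ × T) (c : F) :
    evalGr F T A ψ (TensorAlgebra.ι F (Finsupp.single p c)) =
      Unitization.inr (c • ψ p) := by
  simp [evalGr]

theorem grToH_mem_PnH (F : Type*) [Field F] (T : Type*) [DecidableEq T] (n : ℕ) :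
    ∀ x ∈ PnGr F T n, grToH F T x ∈ PnH F (T → F) n := by
  intro x hx
  induction hx using Submodule.span_induction with
  | mem f hf =>
    obtain ⟨σ, t, rfl⟩ := hf
    rw [map_list_prod, List.map_ofFn]
    refine Submodule.subset_span ⟨σ, fun j => Pi.single (t j) 1, ?_⟩
    refine congrArg List.prod (congrArg List.ofFn (funext fun j => ?_))
    simp only [Function.comp_apply]
    rw [grToH_ι, one_smul]
  | zero => rw [map_zero]; exact zero_mem _
  | add a b _ _ ha hb => rw [map_add]; exact add_mem ha hb
  | smul c a _ ha => rw [map_smul]; exact Submodule.smul_mem _ c ha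

theorem prod_sub_prod_mem {F R : Type*} [Field F] [Ring R] [Module F R]
    (I : Submodule F R) (hL : ∀ x y : R, y ∈ I → x * y ∈ I)
    (hR : ∀ x y : R, y ∈ I → y * x ∈ I) :
    ∀ {lu lv : List R}, List.Forall₂ (fun u v => u - v ∈ I) lu lv →
      lu.prod - lv.prod ∈ I := by
  intro lu lv h
  induction h with
  | nil => simpa using zero_mem I
  | @cons u v lu lv huv _ ih =>
    rw [List.prod_cons, List.prod_cons]
    have heq : u * lu.prod - v * lv.prod
        = u * (lu.prod - lv.prod) + (u - v) * lv.prod := by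
      rw [mul_sub, sub_mul]; abel
    rw [heq]
    exact add_mem (hL _ _ ih) (hR _ _ huv)

set_option maxHeartbeats 1000000 in
/-- Let `A` be a finite-dimensional `T`-graded algebra over a field `F`, where `T` is a
semigroup, and endow `A` with the natural generalized `(FT)*`-action `h·a^{(t)} =
h(t)·a^{(t)}` (here `(FT)* = T → F` with pointwise product).  Then for all `n`, the `n`-th
codimension of graded polynomial identities equals the `n`-th codimension of
`(FT)*`-identities: `c_n^{T-gr}(A) = c_n^{(FT)*}(A)`. -/
theorem graded_codim_eq_dual_codim (F : Type*) [Field F]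
    (T : Type*) [Semigroup T] [DecidableEq T]
    (A : Type*) [NonUnitalRing A] [Module F A] [SMulCommClass F A A] [IsScalarTower F A A]
    [FiniteDimensional F A]
    (𝒜 : T → Submodule F A)
    (hgrmul : ∀ g t : T, ∀ a ∈ 𝒜 g, ∀ b ∈ 𝒜 t, a * b ∈ 𝒜 (g * t))
    (hint : DirectSum.IsInternal 𝒜)
    (ρ : (T → F) →ₐ[F] Module.End F A)
    (hρ : ∀ (h : T → F) (t : T), ∀ a ∈ 𝒜 t, ρ h a = h t • a) :
    ∀ n : ℕ,
      Module.rank F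
        (↥(PnGr F T n) ⧸ Submodule.comap (PnGr F T n).subtype (IdGr F T A 𝒜)) =
      Module.rank F
        (↥(PnH F (T → F) n) ⧸
          Submodule.comap (PnH F (T → F) n).subtype (IdHSub F A (T → F) ρ)) := by
  classical
  intro n
  -- notation
  set Φ := grToH F T with hΦ
  set Id2 := IdHSub F A (T → F) ρ with hId2
  set Id1 := IdGr F T A 𝒜 with hId1
  -- finitely many nonzero components
  have hSfin : {t | 𝒜 t ≠ ⊥}.Finite :=
    Submodule.finite_ne_bot_of_iSupIndep hint.submodule_iSupIndep
  set S : Finset T := hSfin.toFinset with hSdef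
  have hSmem : ∀ t : T, t ∈ S ↔ 𝒜 t ≠ ⊥ := fun t => hSfin.mem_toFinset
  have htop : ∀ a : A, a ∈ ⨆ t, 𝒜 t := by
    rw [hint.submodule_iSup_eq_top]; exact fun a => trivial
  -- projections
  have hproj : ∀ (t s : T) (a : A), a ∈ 𝒜 s →
      ρ (Pi.single t 1) a = if s = t then a else 0 := by
    intro t s a ha
    rw [hρ _ s a ha, Pi.single_apply]
    split <;> simp
  have hprojmem : ∀ (t : T) (a : A), ρ (Pi.single t 1) a ∈ 𝒜 t := by
    intro t a
    refine Submodule.iSup_induction 𝒜 (motive := fun a => ρ (Pi.single t 1) a ∈ 𝒜 t) (htop a)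
      (fun s x hx => ?_) (by simp) (fun x y hx hy => by
        show ρ (Pi.single t 1) (x + y) ∈ 𝒜 t
        rw [map_add]; exact add_mem hx hy)
    show ρ (Pi.single t 1) x ∈ 𝒜 t
    rw [hproj t s x hx]
    split
    · next h => exact h ▸ hx
    · exact zero_mem _
  have hdecomp : ∀ (h : T → F) (a : A), ρ h a = ∑ t ∈ S, h t • ρ (Pi.single t 1) a := by
    intro h a
    refine Submodule.iSup_induction 𝒜
      (motive := fun a => ρ h a = ∑ t ∈ S, h t • ρ (Pi.single t 1) a) (htop a)
      (fun s x hx => ?_) (by simp) (fun x y hx hy => by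
        show ρ h (x + y) = ∑ t ∈ S, h t • ρ (Pi.single t 1) (x + y)
        simp only [map_add, smul_add, Finset.sum_add_distrib, hx, hy])
    show ρ h x = ∑ t ∈ S, h t • ρ (Pi.single t 1) x
    rw [hρ _ s x hx]
    have : ∀ t ∈ S, h t • ρ (Pi.single t 1) x = if s = t then h s • x else 0 := by
      intro t _
      rw [hproj t s x hx]
      split
      · next hst => rw [hst]
      · simp
    rw [Finset.sum_congr rfl this]
    by_cases hs : s ∈ S
    · rw [Finset.sum_ite_eq S s (fun _ => h s • x)] <;> simp [hs]
    · have : 𝒜 s = ⊥ := by by_contra hne; exact hs ((hSmem s).2 hne)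
      have hx0 : x = 0 := by simpa [this] using hx
      simp [hx0]
  -- comparison of evaluations
  have hcomp : ∀ ψ : ℕ → A,
      (evalH F A (T → F) ρ ψ).comp Φ =
        evalGr F T A (fun p => ρ (Pi.single p.2 1) (ψ p.1)) := by
    intro ψ
    apply TensorAlgebra.hom_ext
    apply Finsupp.lhom_ext
    intro p c
    have h1 := grToH_ι F T p c
    simp only [LinearMap.comp_apply, AlgHom.toLinearMap_apply, AlgHom.comp_apply, ← hΦ, h1,
      evalH_ι, evalGr_ι]
    rw [hΦ, h1, evalH_ι, map_smul]
    simp [LinearMap.smul_apply]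
  -- membership criteria
  have hmemIdH : ∀ f, f ∈ Id2 ↔ ∀ ψ : ℕ → A, evalH F A (T → F) ρ ψ f = 0 := by
    intro f; simp [hId2, IdHSub, Submodule.mem_iInf, LinearMap.mem_ker]
  have hmemIdGr : ∀ f, f ∈ Id1 ↔
      ∀ ψ : {ψ : ℕ × T → A // ∀ (i : ℕ) (t : T), ψ (i, t) ∈ 𝒜 t},
        evalGr F T A ψ.1 f = 0 := by
    intro f; simp [hId1, IdGr, Submodule.mem_iInf, LinearMap.mem_ker]
  -- the two directions
  have hdir1 : ∀ f ∈ Id1, Φ f ∈ Id2 := by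
    intro f hf
    rw [hmemIdH]
    intro ψ
    have h1 : evalH F A (T → F) ρ ψ (Φ f)
        = evalGr F T A (fun p => ρ (Pi.single p.2 1) (ψ p.1)) f :=
      DFunLike.congr_fun (hcomp ψ) f
    rw [h1]
    exact (hmemIdGr f).1 hf ⟨fun p => ρ (Pi.single p.2 1) (ψ p.1),
      fun i t => hprojmem t (ψ i)⟩
  have hdir2 : ∀ f, Φ f ∈ Id2 → f ∈ Id1 := by
    intro f hf
    rw [hmemIdGr]
    rintro ⟨ψ', hψ'⟩
    set ψ : ℕ → A := fun i => ∑ t ∈ S, ψ' (i, t) with hψdef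
    have hkey : (fun p : ℕ × T => ρ (Pi.single p.2 1) (ψ p.1)) = ψ' := by
      funext p
      obtain ⟨i, t⟩ := p
      show ρ (Pi.single t 1) (∑ s ∈ S, ψ' (i, s)) = ψ' (i, t)
      rw [map_sum, Finset.sum_congr rfl (fun s _ => hproj t s _ (hψ' i s))]
      by_cases ht : t ∈ S
      · rw [Finset.sum_ite_eq' S t (fun s => ψ' (i, s))]; simp [ht]
      · have h1 : 𝒜 t = ⊥ := by by_contra hne; exact ht ((hSmem t).2 hne)
        have h2 : ψ' (i, t) = 0 := by simpa [h1] using hψ' i t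
        rw [h2]
        apply Finset.sum_eq_zero
        intro s hs
        split
        · next hst => exact absurd (hst ▸ hs) ht
        · rfl
    show evalGr F T A ψ' f = 0
    rw [← hkey, ← DFunLike.congr_fun (hcomp ψ) f]
    exact (hmemIdH _).1 hf ψ
  -- Φ maps P_n^gr into P_n^H
  have hPmap : ∀ x ∈ PnGr F T n, Φ x ∈ PnH F (T → F) n := fun x hx =>
    grToH_mem_PnH F T n x hx
  -- Id2 is closed under multiplication
  have hIdmulL : ∀ x y : FreeHPolyAlg F (T → F), y ∈ Id2 → x * y ∈ Id2 := by
    intro x y hy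
    rw [hmemIdH] at hy ⊢
    intro ψ
    rw [map_mul, hy ψ, mul_zero]
  have hIdmulR : ∀ x y : FreeHPolyAlg F (T → F), y ∈ Id2 → y * x ∈ Id2 := by
    intro x y hy
    rw [hmemIdH] at hy ⊢
    intro ψ
    rw [map_mul, hy ψ, zero_mul]
  -- the restricted map and the induced map on quotients
  set K1 := Submodule.comap (PnGr F T n).subtype Id1 with hK1
  set K2 := Submodule.comap (PnH F (T → F) n).subtype Id2 with hK2
  set ΦP : ↥(PnGr F T n) →ₗ[F] ↥(PnH F (T → F) n) :=
    Φ.toLinearMap.restrict hPmap with hΦP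
  have hΦPapply : ∀ x : ↥(PnGr F T n), (ΦP x : FreeHPolyAlg F (T → F)) = Φ x.1 :=
    fun x => rfl
  have hker : K1 ≤ LinearMap.ker (K2.mkQ.comp ΦP) := by
    intro x hx
    rw [LinearMap.mem_ker, LinearMap.comp_apply, Submodule.mkQ_apply,
      Submodule.Quotient.mk_eq_zero]
    show Φ x.1 ∈ Id2
    exact hdir1 _ hx
  set ind := Submodule.liftQ K1 (K2.mkQ.comp ΦP) hker with hind
  have hinj : Function.Injective ind := by
    rw [← LinearMap.ker_eq_bot, hind]
    refine Submodule.ker_liftQ_eq_bot K1 _ hker ?_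
    intro x hx
    rw [LinearMap.mem_ker, LinearMap.comp_apply, Submodule.mkQ_apply,
      Submodule.Quotient.mk_eq_zero] at hx
    exact hdir2 _ hx
  -- surjectivity: the key inclusion P_n^H ≤ Φ(P_n^gr) ⊔ (P_n^H ⊓ Id2)
  have hDle : Submodule.map Φ.toLinearMap (PnGr F T n) ≤ PnH F (T → F) n := by
    rintro _ ⟨x, hx, rfl⟩
    exact hPmap x hx
  have hsup : PnH F (T → F) n ≤
      Submodule.map Φ.toLinearMap (PnGr F T n) ⊔ (PnH F (T → F) n ⊓ Id2) := by
    refine Submodule.span_le.2 ?_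
    rintro f ⟨σ, h, rfl⟩
    set gent : Fin n → T → FreeHPolyAlg F (T → F) :=
      fun j t => TensorAlgebra.ι F
        (Finsupp.single ((σ j : Fin n) : ℕ) (Pi.single t 1 : T → F)) with hgent
    set v : Fin n → FreeHPolyAlg F (T → F) :=
      fun j => ∑ t ∈ S, h j t • gent j t with hv
    -- step 1: products of the v's lie in suitable spans
    have hclaim : ∀ l : List (Fin n),
        (l.map v).prod ∈ Submodule.span F
          {x | ∃ ts : List T, ts.length = l.length ∧
            x = (List.zipWith gent l ts).prod} := by
      intro l
      induction l with
      | nil => exact Submodule.subset_span ⟨[], rfl, by simp⟩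
      | cons i l ih =>
        rw [List.map_cons, List.prod_cons]
        have key : ∀ x ∈ Submodule.span F
            {x | ∃ ts : List T, ts.length = l.length ∧
              x = (List.zipWith gent l ts).prod},
            v i * x ∈ Submodule.span F
              {x | ∃ ts : List T, ts.length = (i :: l).length ∧
                x = (List.zipWith gent (i :: l) ts).prod} := by
          intro x hx
          induction hx using Submodule.span_induction with
          | mem x hx =>
            obtain ⟨ts, hlen, rfl⟩ := hx
            rw [hv, Finset.sum_mul]
            refine Submodule.sum_mem _ fun t ht => ?_
            rw [smul_mul_assoc]
            refine Submodule.smul_mem _ _ (Submodule.subset_span ?_)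
            exact ⟨t :: ts, by simp [hlen],
              by rw [List.zipWith_cons_cons, List.prod_cons]⟩
          | zero => rw [mul_zero]; exact zero_mem _
          | add a b _ _ ha hb => rw [mul_add]; exact add_mem ha hb
          | smul c a _ ha => rw [mul_smul_comm]; exact Submodule.smul_mem _ c ha
        exact key _ ih
    -- step 2: such products lie in the image of P_n^gr
    have hEle : Submodule.span F
        {x | ∃ ts : List T, ts.length = (List.finRange n).length ∧
          x = (List.zipWith gent (List.finRange n) ts).prod} ≤
            Submodule.map Φ.toLinearMap (PnGr F T n) := by
      refine Submodule.span_le.2 ?_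
      rintro x ⟨ts, hlen, rfl⟩
      rw [List.length_finRange] at hlen
      have hzip : List.zipWith gent (List.finRange n) ts =
          List.ofFn (fun j => gent j (ts.get (Fin.cast hlen.symm j))) := by
        refine List.ext_getElem (by simp [hlen]) fun k h1 h2 => ?_
        simp only [List.getElem_zipWith, List.getElem_ofFn, List.getElem_finRange]
        congr 1
      rw [hzip]
      refine ⟨(List.ofFn fun j => TensorAlgebra.ι F
          (Finsupp.single (((σ j : Fin n) : ℕ), ts.get (Fin.cast hlen.symm j)) (1 : F))).prod,
        Submodule.subset_span ⟨σ, fun j => ts.get (Fin.cast hlen.symm j), rfl⟩, ?_⟩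
      show Φ _ = _
      rw [map_list_prod, List.map_ofFn]
      refine congrArg List.prod (congrArg List.ofFn (funext fun j => ?_))
      simp only [Function.comp_apply]
      rw [hΦ, grToH_ι, one_smul]
    -- step 3: the monomial is congruent to the v-product modulo Id2
    have hcong : (List.ofFn fun j => TensorAlgebra.ι F
        (Finsupp.single ((σ j : Fin n) : ℕ) (h j))).prod
          - ((List.finRange n).map v).prod ∈ Id2 := by
      rw [List.ofFn_eq_map]
      refine prod_sub_prod_mem Id2 hIdmulL hIdmulR ?_
      rw [List.forall₂_map_left_iff, List.forall₂_map_right_iff]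
      rw [List.forall₂_same]
      intro j _
      rw [hmemIdH]
      intro ψ
      have hinrsum : ∀ (g : T → A),
          (Unitization.inr (∑ t ∈ S, g t) : Unitization F A)
            = ∑ t ∈ S, (Unitization.inr (g t) : Unitization F A) :=
        fun g => map_sum (Unitization.inrHom F F A) g S
      rw [map_sub, evalH_ι, hv, map_sum]
      have hterm : ∀ t ∈ S, evalH F A (T → F) ρ ψ (h j t • gent j t)
          = h j t • (Unitization.inr (ρ (Pi.single t 1) (ψ ((σ j : Fin n) : ℕ)))
              : Unitization F A) := by
        intro t _
        rw [map_smul, hgent, evalH_ι]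
      rw [Finset.sum_congr rfl hterm, hdecomp (h j) (ψ ((σ j : Fin n) : ℕ)), hinrsum]
      rw [sub_eq_zero]
      refine Finset.sum_congr rfl fun t _ => ?_
      rw [Unitization.inr_smul]
    -- assemble
    have h1 : ((List.finRange n).map v).prod
        ∈ Submodule.map Φ.toLinearMap (PnGr F T n) :=
      hEle (hclaim (List.finRange n))
    have h2 : (List.ofFn fun j => TensorAlgebra.ι F
        (Finsupp.single ((σ j : Fin n) : ℕ) (h j))).prod ∈ PnH F (T → F) n :=
      Submodule.subset_span ⟨σ, h, rfl⟩
    have h3 : (List.ofFn fun j => TensorAlgebra.ι F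
        (Finsupp.single ((σ j : Fin n) : ℕ) (h j))).prod
          = ((List.finRange n).map v).prod
            + ((List.ofFn fun j => TensorAlgebra.ι F
              (Finsupp.single ((σ j : Fin n) : ℕ) (h j))).prod
                - ((List.finRange n).map v).prod) := by abel
    rw [h3]
    exact Submodule.add_mem_sup h1
      ⟨sub_mem h2 (hDle h1), hcong⟩
  have hsurj : Function.Surjective ind := by
    intro y
    obtain ⟨w, rfl⟩ := Submodule.mkQ_surjective K2 y
    obtain ⟨d, hd, r, hr, hw⟩ := Submodule.mem_sup.1 (hsup w.2)
    obtain ⟨z, hz, rfl⟩ := hd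
    refine ⟨Submodule.Quotient.mk ⟨z, hz⟩, ?_⟩
    rw [hind, Submodule.liftQ_apply, LinearMap.comp_apply, Submodule.mkQ_apply,
      Submodule.mkQ_apply]
    rw [Submodule.Quotient.eq]
    refine Submodule.mem_comap.2 ?_
    have hval : ((ΦP ⟨z, hz⟩ - w : ↥(PnH F (T → F) n)) : FreeHPolyAlg F (T → F)) = -r := by
      rw [Submodule.coe_sub, hΦPapply, ← hw]
      show Φ z - (Φ.toLinearMap z + r) = -r
      rw [AlgHom.toLinearMap_apply]
      abel
    show ((ΦP ⟨z, hz⟩ - w : ↥(PnH F (T → F) n)) : FreeHPolyAlg F (T → F)) ∈ Id2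
    rw [hval]
    exact neg_mem hr.2
  exact ((LinearEquiv.ofBijective ind ⟨hinj, hsurj⟩).rank_eq)
end
end
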